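/- Let n be a positive integer and g an analytic function defined in a neighborhood of 1. Then the limit as (z_1,...,z_n) → (1,...,1) of the sum over i=1..n of g(z_i) divided by the product over j ≠ i of (z_i - z_j) equals the (n-1)-st derivative of g at 1 divided by (n-1)!. -/

import Mathlib

open Filter Topology

open Finset Metric Complex intervalIntegral in
lemma staircase_partial_fractions {n : ℕ} (hn : 0 < n) (z : Fin n → ℂ)
    (hz : Function.Injective z) (w : ℂ) (hw : ∀ j, w ≠ z j) :
    ∑ i : Fin n, (∏ j ∈ Finset.univ.erase i, (z i - z j))⁻¹ * (w - z i)⁻¹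
      = (∏ j : Fin n, (w - z j))⁻¹ := by
  have hP : (∏ j : Fin n, (w - z j)) ≠ 0 :=
    Finset.prod_ne_zero_iff.2 fun j _ => sub_ne_zero.2 (hw j)
  have key : ∑ i : Fin n, (∏ j ∈ Finset.univ.erase i, (z i - z j))⁻¹
      * ∏ j ∈ Finset.univ.erase i, (w - z j) = 1 := by
    have h1 := Lagrange.sum_basis (s := Finset.univ) (v := z) hz.injOn
      (Finset.univ_nonempty_iff.2 (Fin.pos_iff_nonempty.1 hn))
    have h2 := congrArg (Polynomial.eval w) h1
    rw [Polynomial.eval_finset_sum, Polynomial.eval_one] at h2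
    rw [← h2]
    refine Finset.sum_congr rfl fun i _ => ?_
    rw [Lagrange.basis, Polynomial.eval_prod, ← Finset.prod_inv_distrib,
      ← Finset.prod_mul_distrib]
    refine Finset.prod_congr rfl fun j _ => ?_
    simp [Lagrange.basisDivisor, mul_comm]
  refine eq_inv_of_mul_eq_one_left ?_
  rw [Finset.sum_mul, ← key]
  refine Finset.sum_congr rfl fun i _ => ?_
  rw [← Finset.mul_prod_erase Finset.univ _ (Finset.mem_univ i)]
  have hwi : w - z i ≠ 0 := sub_ne_zero.2 (hw i)
  rw [mul_assoc, ← mul_assoc ((w - z i)⁻¹), inv_mul_cancel₀ hwi, one_mul]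

open Finset Metric Complex intervalIntegral in
lemma staircase_sum_eq_integral {n : ℕ} (hn : 0 < n) (g : ℂ → ℂ) {r : ℝ} (hr : 0 < r)
    (hd : DifferentiableOn ℂ g (Metric.closedBall 1 r))
    (z : Fin n → ℂ) (hz : Function.Injective z)
    (hball : ∀ i, z i ∈ Metric.ball (1:ℂ) r) :
    ∑ i : Fin n, g (z i) / ∏ j ∈ Finset.univ.erase i, (z i - z j)
      = (2 * Real.pi * Complex.I)⁻¹ *
        ∮ w in C(1, r), (∏ j : Fin n, (w - z j)⁻¹) * g w := by
  have hwz : ∀ w ∈ sphere (1:ℂ) r, ∀ j, w ≠ z j := by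
    intro w hw j hwj
    subst hwj
    exact absurd (mem_sphere.1 hw ▸ mem_ball.1 (hball j)) (lt_irrefl _)
  have hcongr : (∮ w in C(1, r), (∏ j : Fin n, (w - z j)⁻¹) * g w)
      = ∮ w in C(1, r), ∑ i : Fin n,
          ((∏ j ∈ Finset.univ.erase i, (z i - z j))⁻¹ * (w - z i)⁻¹) * g w := by
    refine circleIntegral.integral_congr hr.le fun w hw => ?_
    rw [← Finset.sum_mul, staircase_partial_fractions hn z hz w (hwz w hw),
      Finset.prod_inv_distrib]
  rw [hcongr]
  have hint : ∀ i : Fin n, CircleIntegrable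
      (fun w => ((∏ j ∈ Finset.univ.erase i, (z i - z j))⁻¹ * (w - z i)⁻¹) * g w) 1 r := by
    intro i
    apply ContinuousOn.circleIntegrable hr.le
    refine (ContinuousOn.mul ?_ ?_)
    · refine continuousOn_const.mul (ContinuousOn.inv₀ (by fun_prop) ?_)
      exact fun w hw => sub_ne_zero.2 (hwz w hw i)
    · exact (hd.continuousOn).mono (sphere_subset_closedBall)
  have hswap : (∮ w in C(1, r), ∑ i : Fin n,
        ((∏ j ∈ Finset.univ.erase i, (z i - z j))⁻¹ * (w - z i)⁻¹) * g w)
      = ∑ i : Fin n, ∮ w in C(1, r),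
        ((∏ j ∈ Finset.univ.erase i, (z i - z j))⁻¹ * (w - z i)⁻¹) * g w := by
    simp only [circleIntegral, smul_sum]
    rw [intervalIntegral.integral_finset_sum]
    intro i _
    exact (hint i).out
  rw [hswap]
  have hcau : ∀ i : Fin n, (∮ w in C(1, r), (w - z i)⁻¹ • g w)
      = (2 * Real.pi * Complex.I) • g (z i) :=
    fun i => hd.circleIntegral_sub_inv_smul (hball i)
  have hpi : (2 * ↑Real.pi * Complex.I) ≠ 0 := by
    simp [Real.pi_ne_zero, Complex.I_ne_zero]
  rw [Finset.mul_sum]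
  refine Finset.sum_congr rfl fun i _ => ?_
  have : (∮ w in C(1, r), ((∏ j ∈ Finset.univ.erase i, (z i - z j))⁻¹ * (w - z i)⁻¹) * g w)
      = (∏ j ∈ Finset.univ.erase i, (z i - z j))⁻¹ * ∮ w in C(1, r), (w - z i)⁻¹ * g w := by
    rw [← circleIntegral.integral_const_mul]
    simp [mul_assoc]
  rw [this]
  have h2 : (∮ w in C(1, r), (w - z i)⁻¹ * g w) = (2 * Real.pi * Complex.I) * g (z i) := by
    simpa [smul_eq_mul] using hcau i
  rw [h2, div_eq_mul_inv]
  field_simp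

open Finset Metric Complex in
lemma staircase_sphere_ne {r : ℝ} {w x : ℂ} (hw : w ∈ sphere (1:ℂ) r)
    (hx : x ∈ ball (1:ℂ) r) : w ≠ x := by
  intro h; subst h
  exact absurd (mem_sphere.1 hw ▸ mem_ball.1 hx) (lt_irrefl _)

open Finset Metric Complex intervalIntegral in
lemma staircase_key_tendsto {n : ℕ} (g : ℂ → ℂ) {r : ℝ} (hr : 0 < r)
    (hd : DifferentiableOn ℂ g (Metric.closedBall 1 r)) :
    Tendsto (fun z : Fin n → ℂ => ∮ w in C(1, r), (∏ j : Fin n, (w - z j)⁻¹) * g w)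
      (𝓝 (fun _ => (1:ℂ)))
      (𝓝 (∮ w in C(1, r), (∏ _j : Fin n, (w - 1)⁻¹) * g w)) := by
  obtain ⟨M, hM⟩ : ∃ M, ∀ w ∈ sphere (1:ℂ) r, ‖g w‖ ≤ M :=
    (isCompact_sphere 1 r).exists_bound_of_continuousOn
      (hd.continuousOn.mono sphere_subset_closedBall)
  have hgc : Continuous fun θ : ℝ => g (circleMap 1 r θ) :=
    (hd.continuousOn.mono sphere_subset_closedBall).comp_continuous
      (continuous_circleMap 1 r) (fun θ => circleMap_mem_sphere 1 hr.le θ)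
  have hsph : ∀ θ : ℝ, circleMap 1 r θ ∈ sphere (1:ℂ) r :=
    fun θ => circleMap_mem_sphere 1 hr.le θ
  simp only [circleIntegral]
  apply intervalIntegral.tendsto_integral_filter_of_dominated_convergence
    (bound := fun _ => r * ((2/r)^n * M))
  · have hE : ∀ᶠ z : Fin n → ℂ in 𝓝 (fun _ => (1:ℂ)), ∀ i, z i ∈ ball (1:ℂ) (r/2) :=
      eventually_all.2 fun i =>
        (continuous_apply i).continuousAt.preimage_mem_nhds (ball_mem_nhds 1 (half_pos hr))
    filter_upwards [hE] with z hz
    refine Continuous.aestronglyMeasurable ?_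
    have hderiv : Continuous fun θ : ℝ => deriv (circleMap 1 r) θ := by
      simp only [deriv_circleMap]; fun_prop
    refine hderiv.smul ?_
    refine Continuous.mul ?_ hgc
    refine continuous_finset_prod _ fun j _ => ?_
    refine ((continuous_circleMap 1 r).sub continuous_const).inv₀ fun θ => ?_
    exact sub_ne_zero.2 (staircase_sphere_ne (hsph θ)
      (ball_subset_ball (half_le_self hr.le) (hz j)))
  · have hE : ∀ᶠ z : Fin n → ℂ in 𝓝 (fun _ => (1:ℂ)), ∀ i, z i ∈ ball (1:ℂ) (r/2) :=
      eventually_all.2 fun i =>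
        (continuous_apply i).continuousAt.preimage_mem_nhds (ball_mem_nhds 1 (half_pos hr))
    filter_upwards [hE] with z hz
    refine MeasureTheory.ae_of_all _ fun θ _ => ?_
    have h1 : ‖circleMap 0 r θ * Complex.I‖ = r := by
      rw [norm_mul, Complex.norm_I, mul_one, norm_circleMap_zero,
        abs_of_pos hr]
    rw [norm_smul, deriv_circleMap, h1, norm_mul]
    refine mul_le_mul_of_nonneg_left ?_ hr.le
    have hgb : ‖g (circleMap 1 r θ)‖ ≤ M := hM _ (hsph θ)
    refine mul_le_mul ?_ hgb (norm_nonneg _) (by positivity)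
    rw [norm_prod]
    calc ∏ j : Fin n, ‖(circleMap 1 r θ - z j)⁻¹‖
        ≤ ∏ _j : Fin n, (2/r) := by
          refine Finset.prod_le_prod (fun _ _ => norm_nonneg _) fun j _ => ?_
          rw [norm_inv]
          rw [inv_le_comm₀ ?pos (by positivity)]
          case pos =>
            rw [norm_pos_iff, sub_ne_zero]
            exact staircase_sphere_ne (hsph θ)
              (ball_subset_ball (half_le_self hr.le) (hz j))
          · rw [inv_div]
            have hd1 : dist (circleMap 1 r θ) (1:ℂ) = r := mem_sphere.1 (hsph θ)
            have hd2 : dist (z j) (1:ℂ) < r/2 := mem_ball.1 (hz j)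
            have := dist_triangle (circleMap 1 r θ) (z j) (1:ℂ)
            have : r/2 ≤ dist (circleMap 1 r θ) (z j) := by
              rw [hd1] at this; linarith
            simpa [dist_eq_norm] using this
        _ = (2/r)^n := by simp [Finset.prod_const, div_pow]
  · exact intervalIntegrable_const
  · refine MeasureTheory.ae_of_all _ fun θ _ => ?_
    refine tendsto_const_nhds.smul (Tendsto.mul ?_ tendsto_const_nhds)
    refine tendsto_finset_prod _ fun j _ => ?_
    refine Tendsto.inv₀ (tendsto_const_nhds.sub ((continuous_apply j).tendsto _)) ?_
    exact sub_ne_zero.2 (staircase_sphere_ne (hsph θ) (mem_ball_self hr))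

open Finset Metric Complex in
lemma staircase_target {n : ℕ} (hn : 1 ≤ n) (g : ℂ → ℂ) {r : ℝ} (hr : 0 < r)
    (hd : DifferentiableOn ℂ g (Metric.closedBall 1 r)) :
    iteratedDeriv (n-1) g 1 / (Nat.factorial (n-1)) =
      (2 * Real.pi * Complex.I)⁻¹ *
        ∮ w in C(1, (r:ℝ)), (∏ _j : Fin n, (w - 1)⁻¹) * g w := by
  lift r to NNReal using hr.le with R hR
  subst hR
  have hr' : 0 < R := by exact_mod_cast hr
  have hps := hd.hasFPowerSeriesOnBall hr'
  have h1 := hps.factorial_smul (1:ℂ) (n-1)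
  have h2 := cauchyPowerSeries_apply g 1 (R:ℝ) (n-1) 1
  have hfac : ((n-1).factorial : ℂ) ≠ 0 := by
    exact_mod_cast Nat.cast_ne_zero.2 (Nat.factorial_ne_zero _)
  have hint : (∮ z in C(1, (R:ℝ)), ((1:ℂ) / (z - 1)) ^ (n-1) • (z - 1)⁻¹ • g z)
      = ∮ w in C(1, (R:ℝ)), (∏ _j : Fin n, (w - 1)⁻¹) * g w := by
    congr 1
    funext w
    rw [Finset.prod_const, Finset.card_univ, Fintype.card_fin, smul_eq_mul, smul_eq_mul,
      one_div, ← mul_assoc, ← pow_succ, Nat.sub_add_cancel hn]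
  rw [iteratedDeriv_eq_iteratedFDeriv, ← h1, h2, nsmul_eq_mul, smul_eq_mul, hint,
    mul_div_cancel_left₀ _ hfac]

/-- Let `n` be a positive integer and `g` an analytic function defined
in a neighborhood of `1`. Then the limit, as the tuple `(z_1,…,z_n)` of pairwise
distinct points tends to `(1,…,1)`, of `∑ i, g (z i) / ∏_{j ≠ i} (z i - z j)`
equals `g^{(n-1)}(1) / (n-1)!`. -/
theorem staircase_limit_div_diff (n : ℕ) (hn : 1 ≤ n) (g : ℂ → ℂ)
    (U : Set ℂ) (hU : U ∈ 𝓝 (1 : ℂ)) (hg : AnalyticOn ℂ g U) :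
    Tendsto
      (fun z : Fin n → ℂ =>
        ∑ i : Fin n, g (z i) / ∏ j ∈ Finset.univ.erase i, (z i - z j))
      (𝓝[{z : Fin n → ℂ | Function.Injective z}] (fun _ => (1 : ℂ)))
      (𝓝 (iteratedDeriv (n - 1) g 1 / (Nat.factorial (n - 1)))) := by
  obtain ⟨r, hr0, hsub⟩ : ∃ r > 0, Metric.closedBall (1:ℂ) r ⊆ U :=
    Metric.nhds_basis_closedBall.mem_iff.1 hU
  have hd : DifferentiableOn ℂ g (Metric.closedBall 1 r) :=
    (hg.differentiableOn).mono hsub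
  set l := 𝓝[{z : Fin n → ℂ | Function.Injective z}] (fun _ => (1 : ℂ)) with hl
  have key : Tendsto
      (fun z : Fin n → ℂ => (2 * Real.pi * Complex.I)⁻¹ *
        ∮ w in C(1, r), (∏ j : Fin n, (w - z j)⁻¹) * g w) l
      (𝓝 ((2 * Real.pi * Complex.I)⁻¹ *
        ∮ w in C(1, r), (∏ _j : Fin n, (w - 1)⁻¹) * g w)) :=
    ((staircase_key_tendsto g hr0 hd).mono_left nhdsWithin_le_nhds).const_mul _
  have heq : ∀ᶠ z : Fin n → ℂ in l,
      (∑ i : Fin n, g (z i) / ∏ j ∈ Finset.univ.erase i, (z i - z j))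
        = (2 * Real.pi * Complex.I)⁻¹ *
          ∮ w in C(1, r), (∏ j : Fin n, (w - z j)⁻¹) * g w := by
    have hball : ∀ᶠ z : Fin n → ℂ in l, ∀ i, z i ∈ Metric.ball (1:ℂ) r :=
      eventually_nhdsWithin_of_eventually_nhds <| eventually_all.2 fun i =>
        (continuous_apply i).continuousAt.preimage_mem_nhds (Metric.ball_mem_nhds 1 hr0)
    filter_upwards [hball, eventually_mem_nhdsWithin] with z hzball hzinj
    exact staircase_sum_eq_integral hn g hr0 hd z hzinj hzball
  have htgt : iteratedDeriv (n-1) g 1 / (Nat.factorial (n-1)) =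
      (2 * Real.pi * Complex.I)⁻¹ *
        ∮ w in C(1, r), (∏ _j : Fin n, (w - 1)⁻¹) * g w :=
    staircase_target hn g hr0 hd
  rw [htgt]
  refine key.congr' ?_
  filter_upwards [heq] with z hz using hz.symm
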